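/- If P and Q are partition polynomials, then their composition P ∘ Q is a partition polynomial. -/

import Mathlib

open MeasureTheory Polynomial

namespace PPaux

noncomputable def S (N : ℕ) (t : ℕ → ℤ) : Polynomial ℤ :=
  ∑ l ∈ Finset.range (N + 1), C (t l) * X ^ l * (1 - X) ^ (N - l)

noncomputable def H (N : ℕ) (t : ℕ → ℤ) : Polynomial (Polynomial ℤ) :=
  ∑ l ∈ Finset.range (N + 1), Polynomial.monomial l (C (t l) * X ^ (N - l))

def cnv (t b : ℕ → ℤ) (s : ℕ) : ℤ :=
  ∑ p ∈ Finset.HasAntidiagonal.antidiagonal s, t p.1 * b p.2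

lemma H_coeff (N : ℕ) (t : ℕ → ℤ) (ht0 : ∀ j, N < j → t j = 0) (j : ℕ) :
    (H N t).coeff j = C (t j) * X ^ (N - j) := by
  rw [H, Polynomial.finset_sum_coeff]
  simp only [Polynomial.coeff_monomial]
  rw [Finset.sum_ite_eq' (Finset.range (N + 1)) j (fun l => C (t l) * X ^ (N - l))]
  by_cases h : j ≤ N
  · simp [Finset.mem_range, Nat.lt_succ_iff, h]
  · simp [Finset.mem_range, Nat.lt_succ_iff, h, ht0 j (by omega)]

noncomputable def ev : Polynomial (Polynomial ℤ) →+* Polynomial ℤ :=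
  Polynomial.eval₂RingHom (Polynomial.aeval (1 - X : Polynomial ℤ)).toRingHom X

lemma ev_H (N : ℕ) (t : ℕ → ℤ) : ev (H N t) = S N t := by
  rw [H, S, map_sum]
  refine Finset.sum_congr rfl fun l _ => ?_
  rw [ev, Polynomial.coe_eval₂RingHom, Polynomial.eval₂_monomial]
  simp only [AlgHom.toRingHom_eq_coe, RingHom.coe_coe, map_mul, map_pow, Polynomial.aeval_X]
  have : (Polynomial.aeval (1 - X : Polynomial ℤ)) (C (t l)) = C (t l) := by
    simp [Polynomial.aeval_C, Polynomial.C_eq_intCast]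
  rw [this]; ring

lemma conv_zero (N m : ℕ) (t b : ℕ → ℤ) (ht0 : ∀ j, N < j → t j = 0)
    (hb0 : ∀ j, m < j → b j = 0) : ∀ s, N + m < s → cnv t b s = 0 := by
  intro s hs
  rw [cnv]
  refine Finset.sum_eq_zero fun p hp => ?_
  have := Finset.HasAntidiagonal.mem_antidiagonal.mp hp
  by_cases h1 : p.1 ≤ N
  · rw [hb0 p.2 (by omega), mul_zero]
  · rw [ht0 p.1 (by omega), zero_mul]

lemma S_mul (N m : ℕ) (t b : ℕ → ℤ) (ht0 : ∀ j, N < j → t j = 0)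
    (hb0 : ∀ j, m < j → b j = 0) :
    S N t * S m b = S (N + m) (cnv t b) := by
  have hc0 := conv_zero N m t b ht0 hb0
  rw [← ev_H, ← ev_H, ← ev_H, ← map_mul]
  refine congrArg ev ?_
  refine Polynomial.ext fun s => ?_
  rw [Polynomial.coeff_mul, H_coeff _ _ hc0 s]
  simp only [H_coeff N t ht0, H_coeff m b hb0]
  have hCsum : (C (cnv t b s) : Polynomial ℤ)
      = ∑ p ∈ Finset.HasAntidiagonal.antidiagonal s, C (t p.1 * b p.2) := by
    rw [cnv]; exact map_sum Polynomial.C _ _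
  rw [hCsum, Finset.sum_mul]
  refine Finset.sum_congr rfl fun p hp => ?_
  have hps := Finset.HasAntidiagonal.mem_antidiagonal.mp hp
  by_cases h1 : p.1 ≤ N
  · by_cases h2 : p.2 ≤ m
    · rw [mul_mul_mul_comm, ← Polynomial.C_mul, ← pow_add,
        show N - p.1 + (m - p.2) = N + m - s by omega]
    · rw [hb0 p.2 (by omega)]; simp
  · rw [ht0 p.1 (by omega)]; simp

end PPaux
-- part 2
namespace PPaux2
open PPaux

lemma S_add (N : ℕ) (t u : ℕ → ℤ) : S N t + S N u = S N (fun l => t l + u l) := by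
  rw [S, S, S, ← Finset.sum_add_distrib]
  refine Finset.sum_congr rfl fun l _ => ?_
  rw [Polynomial.C_add]; ring

lemma S_choose (m : ℕ) : S m (fun j => (m.choose j : ℤ)) = 1 := by
  have h := add_pow (X : Polynomial ℤ) (1 - X) m
  have h1 : (X : Polynomial ℤ) + (1 - X) = 1 := by ring
  rw [h1, one_pow] at h
  rw [S]
  conv_rhs => rw [h]
  refine Finset.sum_congr rfl fun l _ => ?_
  have hc : (C ((m.choose l : ℤ)) : Polynomial ℤ) = ((m.choose l : ℕ) : Polynomial ℤ) := by
    simp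
  rw [hc]; ring

lemma S_one_sub (m : ℕ) (b : ℕ → ℤ) :
    1 - S m b = S m (fun j => (m.choose j : ℤ) - b j) := by
  have h := S_add m (fun j => (m.choose j : ℤ) - b j) b
  simp only [sub_add_cancel] at h
  rw [S_choose] at h
  rw [← h]; ring

end PPaux2

namespace PPaux3
open PPaux PPaux2

lemma key (m : ℕ) (b : ℕ → ℤ) (hb : ∀ j, 0 ≤ b j ∧ b j ≤ (m.choose j : ℤ))
    (hb0 : ∀ j, m < j → b j = 0) :
    ∀ (n : ℕ) (a : ℕ → ℤ), (∀ i ≤ n, 0 ≤ a i ∧ a i ≤ (n.choose i : ℤ)) →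
    ∃ t : ℕ → ℤ, (∀ l, 0 ≤ t l ∧ t l ≤ ((n * m).choose l : ℤ)) ∧
      (∀ l, n * m < l → t l = 0) ∧
      ∑ i ∈ Finset.range (n + 1), C (a i) * (S m b) ^ i * (1 - S m b) ^ (n - i)
        = S (n * m) t := by
  intro n
  induction n with
  | zero =>
    intro a ha
    refine ⟨fun l => if l = 0 then a 0 else 0, ?_, ?_, ?_⟩
    · intro l
      by_cases h : l = 0
      · subst h; simpa using ha 0 le_rfl
      · simp only [h, if_false]
        exact ⟨le_rfl, Int.natCast_nonneg _⟩
    · intro l hl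
      simp [show l ≠ 0 by omega]
    · simp [S]
  | succ n ih =>
    intro a ha
    have ha0 : 0 ≤ a 0 ∧ a 0 ≤ 1 := by simpa using ha 0 (by omega)
    set v : ℕ → ℤ := fun i => min (a i) (n.choose i) with hv_def
    have hvb : ∀ i ≤ n, 0 ≤ v i ∧ v i ≤ (n.choose i : ℤ) := by
      intro i hi
      exact ⟨le_min (ha i (by omega)).1 (by positivity), min_le_right _ _⟩
    have hub : ∀ i ≤ n, 0 ≤ a (i+1) - v (i+1) ∧ a (i+1) - v (i+1) ≤ (n.choose i : ℤ) := by
      intro i hi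
      have h1 := (ha (i+1) (by omega)).2
      have h2 := (ha (i+1) (by omega)).1
      have hp : ((n+1).choose (i+1) : ℤ) = (n.choose i : ℤ) + (n.choose (i+1) : ℤ) := by
        exact_mod_cast Nat.choose_succ_succ n i
      constructor
      · simp [hv_def]
      · rcases le_total (a (i+1)) ((n.choose (i+1) : ℤ)) with h | h
        · have hv1 : v (i+1) = a (i+1) := min_eq_left h
          rw [hv1]
          simp only [sub_self]
          positivity
        · have hv1 : v (i+1) = (n.choose (i+1) : ℤ) := min_eq_right h
          rw [hv1]; linarith
    obtain ⟨t1, ht1b, ht1z, ht1⟩ := ih (fun i => a (i+1) - v (i+1)) hub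
    obtain ⟨t2, ht2b, ht2z, ht2⟩ := ih v hvb
    have hu0 : a 0 - v 0 = 0 := by
      have hv0 : v 0 = a 0 := min_eq_left (by simpa using ha0.2)
      rw [hv0]; ring
    have hvn : v (n+1) = 0 := by
      have hz : ((n.choose (n+1) : ℕ) : ℤ) = 0 := by
        simp [Nat.choose_eq_zero_of_lt (by omega : n < n + 1)]
      have := (ha (n+1) le_rfl).1
      simp only [hv_def]
      rw [hz]
      exact min_eq_right this
    set Q := S m b with hQdef
    have split : ∑ i ∈ Finset.range (n+1+1), C (a i) * Q ^ i * (1 - Q) ^ (n+1-i)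
        = Q * (∑ i ∈ Finset.range (n+1), C (a (i+1) - v (i+1)) * Q ^ i * (1 - Q) ^ (n-i))
          + (1 - Q) * (∑ i ∈ Finset.range (n+1), C (v i) * Q ^ i * (1 - Q) ^ (n-i)) := by
      have e1 : ∀ i ∈ Finset.range (n+1+1),
          C (a i) * Q ^ i * (1 - Q) ^ (n+1-i)
          = C (a i - v i) * Q ^ i * (1 - Q) ^ (n+1-i)
            + C (v i) * Q ^ i * (1 - Q) ^ (n+1-i) := by
        intro i _
        have : a i = (a i - v i) + v i := by ring
        conv_lhs => rw [this, Polynomial.C_add]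
        ring
      rw [Finset.sum_congr rfl e1, Finset.sum_add_distrib]
      congr 1
      · rw [Finset.sum_range_succ' (fun i => C (a i - v i) * Q ^ i * (1 - Q) ^ (n+1-i)) (n+1)]
        simp only [hu0, Polynomial.C_0, zero_mul, add_zero]
        rw [Finset.mul_sum]
        refine Finset.sum_congr rfl fun i hi => ?_
        have he : n + 1 - (i+1) = n - i := by omega
        rw [he, pow_succ]
        ring
      · rw [Finset.sum_range_succ]
        simp only [hvn, Polynomial.C_0, zero_mul, add_zero]
        rw [Finset.mul_sum]
        refine Finset.sum_congr rfl fun i hi => ?_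
        have hi' : i ≤ n := by simpa [Nat.lt_succ_iff] using hi
        have he : n + 1 - i = (n - i) + 1 := by omega
        rw [he, pow_succ]
        ring
    set bbar : ℕ → ℤ := fun j => (m.choose j : ℤ) - b j with hbbar
    have hbbar0 : ∀ j, m < j → bbar j = 0 := by
      intro j hj
      simp [hbbar, Nat.choose_eq_zero_of_lt hj, hb0 j hj]
    have hmm : (n+1) * m = m + n * m := by ring
    refine ⟨fun s => cnv b t1 s + cnv bbar t2 s, ?_, ?_, ?_⟩
    · intro l
      constructor
      · apply add_nonneg
        · exact Finset.sum_nonneg fun p _ => mul_nonneg (hb p.1).1 (ht1b p.2).1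
        · exact Finset.sum_nonneg fun p _ =>
            mul_nonneg (sub_nonneg.mpr (hb p.1).2) (ht2b p.2).1
      · have hsum : cnv b t1 l + cnv bbar t2 l
            = ∑ p ∈ Finset.HasAntidiagonal.antidiagonal l, (b p.1 * t1 p.2 + bbar p.1 * t2 p.2) := by
          simp only [cnv]
          exact (Finset.sum_add_distrib).symm
        have hch : (((n+1)*m).choose l : ℤ)
            = ∑ p ∈ Finset.HasAntidiagonal.antidiagonal l, (m.choose p.1 : ℤ) * ((n*m).choose p.2 : ℤ) := by
          rw [hmm, Nat.add_choose_eq]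
          push_cast
          rfl
        show cnv b t1 l + cnv bbar t2 l ≤ ((((n+1)*m).choose l : ℕ) : ℤ)
        rw [hsum, hch]
        refine Finset.sum_le_sum fun p _ => ?_
        have h1 : b p.1 * t1 p.2 ≤ b p.1 * ((n*m).choose p.2 : ℤ) :=
          mul_le_mul_of_nonneg_left (ht1b p.2).2 (hb p.1).1
        have h2 : bbar p.1 * t2 p.2 ≤ bbar p.1 * ((n*m).choose p.2 : ℤ) :=
          mul_le_mul_of_nonneg_left (ht2b p.2).2 (sub_nonneg.mpr (hb p.1).2)
        have h3 : b p.1 * ((n*m).choose p.2 : ℤ) + bbar p.1 * ((n*m).choose p.2 : ℤ)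
            = (m.choose p.1 : ℤ) * ((n*m).choose p.2 : ℤ) := by
          simp only [hbbar]; ring
        linarith
    · intro l hl
      have hl' : m + n * m < l := by omega
      show cnv b t1 l + cnv bbar t2 l = 0
      rw [conv_zero m (n*m) b t1 hb0 ht1z l hl',
        conv_zero m (n*m) bbar t2 hbbar0 ht2z l hl', add_zero]
    · rw [split, ht1, ht2, hQdef, S_one_sub]
      rw [S_mul m (n*m) b t1 hb0 ht1z, S_mul m (n*m) bbar t2 hbbar0 ht2z, S_add]
      rw [hmm]

end PPaux3


theorem isPartitionPolynomial_comp' (P Q : Polynomial ℤ)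
    (hP : ∃ (n : ℕ) (a : ℕ → ℤ),
      (∀ i ≤ n, 0 ≤ a i ∧ a i ≤ (n.choose i : ℤ)) ∧
      P = ∑ i ∈ Finset.range (n + 1), C (a i) * X ^ i * (1 - X) ^ (n - i))
    (hQ : ∃ (m : ℕ) (b : ℕ → ℤ),
      (∀ j ≤ m, 0 ≤ b j ∧ b j ≤ (m.choose j : ℤ)) ∧
      Q = ∑ j ∈ Finset.range (m + 1), C (b j) * X ^ j * (1 - X) ^ (m - j)) :
    ∃ (N : ℕ) (t : ℕ → ℤ),
      (∀ l ≤ N, 0 ≤ t l ∧ t l ≤ (N.choose l : ℤ)) ∧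
      P.comp Q = ∑ l ∈ Finset.range (N + 1), C (t l) * X ^ l * (1 - X) ^ (N - l) := by
  obtain ⟨n, a, ha, hP⟩ := hP
  obtain ⟨m, b, hbb, hQ⟩ := hQ
  set b' : ℕ → ℤ := fun j => if j ≤ m then b j else 0 with hb'def
  have hb' : ∀ j, 0 ≤ b' j ∧ b' j ≤ (m.choose j : ℤ) := by
    intro j; by_cases h : j ≤ m
    · simpa [hb'def, h] using hbb j h
    · simp [hb'def, h]
  have hb'0 : ∀ j, m < j → b' j = 0 := by
    intro j hj; simp [hb'def, show ¬ j ≤ m by omega]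
  have hQ' : Q = PPaux.S m b' := by
    rw [hQ, PPaux.S]
    refine Finset.sum_congr rfl fun j hj => ?_
    have hjm : j ≤ m := by
      have := Finset.mem_range.mp hj; omega
    simp [hb'def, hjm]
  obtain ⟨t, htb, htz, hts⟩ := PPaux3.key m b' hb' hb'0 n a ha
  refine ⟨n * m, t, fun l _ => htb l, ?_⟩
  have hcomp : P.comp Q
      = ∑ i ∈ Finset.range (n+1), C (a i) * Q ^ i * (1 - Q) ^ (n - i) := by
    rw [hP]
    simp only [Polynomial.comp, Polynomial.eval₂_finset_sum, Polynomial.eval₂_mul,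
      Polynomial.eval₂_pow, Polynomial.eval₂_C, Polynomial.eval₂_X, Polynomial.eval₂_sub,
      Polynomial.eval₂_one]
  rw [hcomp, hQ', hts, PPaux.S]


/-- `P` is a partition polynomial: `P(X) = ∑_{i=0}^n a_i X^i (1-X)^(n-i)` with
integers `0 ≤ a_i ≤ C(n,i)`. -/
def IsPartitionPolynomial (P : Polynomial ℤ) : Prop :=
  ∃ (n : ℕ) (a : ℕ → ℤ),
    (∀ i ≤ n, 0 ≤ a i ∧ a i ≤ (n.choose i : ℤ)) ∧
    P = ∑ i ∈ Finset.range (n + 1), C (a i) * X ^ i * (1 - X) ^ (n - i)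

/-- the composition of two partition polynomials is a partition
polynomial. -/
theorem isPartitionPolynomial_comp (P Q : Polynomial ℤ)
    (hP : IsPartitionPolynomial P) (hQ : IsPartitionPolynomial Q) :
    IsPartitionPolynomial (P.comp Q) :=
  isPartitionPolynomial_comp' P Q hP hQ
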